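/- Let p_n be integers with |p_n| > 1 and D_n ⊂ ℤ finite sets for all n ≥ 1, and suppose C := sup_n max{|d/p_n| : d ∈ D_n} < ∞. For any n ≥ 1 and m > 0, set J₀ := max{⌊log₂(8Cm)⌋, 0} + 1. Then |p_{n+1}p_{n+2}⋯p_{n+J₀}|^{-1} · Cm < 1/4, and for every ξ ∈ ℝ with |ξ| < m, ∏_{j=1}^∞ |δ̂_{D_{n+J₀+j}}(ξ/(p_{n+1}⋯p_{n+J₀+j}))| ≥ 2/π. -/

import Mathlib

open MeasureTheory Filter Topology Set

noncomputable section

/-- `δ̂_D(ξ) = (1/#D) Σ_{d∈D} e^{2πi d ξ}` for a finite digit set `D ⊂ ℤ`. -/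
def dHat (D : Finset ℤ) (ξ : ℝ) : ℂ :=
  (D.card : ℂ)⁻¹ * ∑ d ∈ D, Complex.exp (2 * Real.pi * Complex.I * (d : ℝ) * ξ)

/-- `J₀ = max{⌊log₂(8Cm)⌋, 0} + 1`. -/
def J0 (C m : ℝ) : ℕ := (max ⌊Real.logb 2 (8 * C * m)⌋ 0).toNat + 1

end

lemma key8 (C m : ℝ) (hC0 : 0 ≤ C) (hm : 0 < m) :
    8 * C * m ≤ 2 ^ J0 C m := by
  rcases le_or_gt (8 * C * m) 1 with h | h
  · calc 8 * C * m ≤ 1 := h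
      _ ≤ 2 ^ J0 C m := one_le_pow₀ (by norm_num)
  · have hx : (0:ℝ) < 8 * C * m := lt_trans one_pos h
    have h1 : (2:ℝ) ^ (Real.logb 2 (8 * C * m)) = 8 * C * m :=
      Real.rpow_logb two_pos (by norm_num) hx
    have h2 : Real.logb 2 (8 * C * m) ≤ (J0 C m : ℝ) := by
      set fl := ⌊Real.logb 2 (8 * C * m)⌋ with hfl
      have hmax : (fl : ℝ) ≤ ((max fl 0).toNat : ℝ) := by
        have h0 : fl ≤ ((max fl 0).toNat : ℤ) := by
          rw [Int.toNat_of_nonneg (le_max_right fl 0)]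
          exact le_max_left fl 0
        exact_mod_cast h0
      have := Int.lt_floor_add_one (Real.logb 2 (8 * C * m))
      have hJ : (J0 C m : ℝ) = ((max fl 0).toNat : ℝ) + 1 := by
        simp [J0, hfl]
      rw [hJ]
      linarith
    calc 8 * C * m = (2:ℝ) ^ (Real.logb 2 (8 * C * m)) := h1.symm
      _ ≤ (2:ℝ) ^ ((J0 C m : ℝ)) := Real.rpow_le_rpow_of_exponent_le one_le_two h2
      _ = 2 ^ J0 C m := by rw [Real.rpow_natCast]

lemma cos_pos_aux (j : ℕ) : 0 < Real.cos (Real.pi / 2 ^ (j + 2)) := by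
  apply Real.cos_pos_of_mem_Ioo
  constructor
  · have h1 : 0 < Real.pi / 2 ^ (j + 2) := by positivity
    have := Real.pi_pos
    nlinarith
  · have h2 : (2:ℝ) < 2 ^ (j + 2) := by
      calc (2:ℝ) = 2 ^ 1 := (pow_one 2).symm
        _ < 2 ^ (j + 2) := by
          apply pow_lt_pow_right₀ one_lt_two
          omega
    exact div_lt_div_of_pos_left Real.pi_pos two_pos h2

lemma sin_pos_aux (N : ℕ) : 0 < Real.sin (Real.pi / 2 ^ (N + 1)) := by
  apply Real.sin_pos_of_pos_of_lt_pi
  · positivity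
  · have h2 : (1:ℝ) < 2 ^ (N + 1) := one_lt_pow₀ one_lt_two (by omega)
    have := Real.pi_pos
    rw [div_lt_iff₀ (by positivity)]
    nlinarith

lemma cos_prod_eq (N : ℕ) :
    ∏ j ∈ Finset.range N, Real.cos (Real.pi / 2 ^ (j + 2)) =
      1 / (2 ^ N * Real.sin (Real.pi / 2 ^ (N + 1))) := by
  induction N with
  | zero => simp
  | succ N ih =>
    rw [Finset.prod_range_succ, ih]
    have harg : Real.pi / 2 ^ (N + 1) = 2 * (Real.pi / 2 ^ (N + 2)) := by ring
    have hs : Real.sin (Real.pi / 2 ^ (N + 1)) =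
        2 * Real.sin (Real.pi / 2 ^ (N + 2)) * Real.cos (Real.pi / 2 ^ (N + 2)) := by
      rw [harg, Real.sin_two_mul]
    have hsp := sin_pos_aux (N + 1)
    have hcp := cos_pos_aux N
    have hsp2 : 0 < Real.sin (Real.pi / 2 ^ (N + 2)) := by
      have := sin_pos_aux (N + 1); convert this using 3 <;> ring
    rw [hs]
    rw [div_mul_eq_mul_div, one_mul, div_eq_div_iff (by positivity) (by positivity)]
    ring

lemma prod_cos_ge (N : ℕ) :
    2 / Real.pi ≤ ∏ j ∈ Finset.range N, Real.cos (Real.pi / 2 ^ (j + 2)) := by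
  rw [cos_prod_eq]
  have hsp := sin_pos_aux N
  have hle : Real.sin (Real.pi / 2 ^ (N + 1)) ≤ Real.pi / 2 ^ (N + 1) :=
    Real.sin_le (by positivity)
  have h2 : (0:ℝ) < 2 ^ N := by positivity
  have hpi := Real.pi_pos
  rw [div_le_div_iff₀ hpi (by positivity)]
  have key : 2 ^ N * Real.sin (Real.pi / 2 ^ (N + 1)) ≤ 2 ^ N * (Real.pi / 2 ^ (N + 1)) :=
    mul_le_mul_of_nonneg_left hle h2.le
  have h3 : (2:ℝ) ^ N * (Real.pi / 2 ^ (N + 1)) = Real.pi / 2 := by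
    field_simp
    ring
  nlinarith

lemma prod_ge_aux (f : ℕ → ℝ) (hf : ∀ j, Real.cos (Real.pi / 2 ^ (j + 2)) ≤ f j)
    (S : Finset ℕ) : 2 / Real.pi ≤ ∏ j ∈ S, f j := by
  obtain ⟨N, hN⟩ := S.exists_nat_subset_range
  have h1 : ∏ j ∈ Finset.range N, Real.cos (Real.pi / 2 ^ (j + 2)) ≤
      ∏ j ∈ S, Real.cos (Real.pi / 2 ^ (j + 2)) := by
    rw [← Finset.prod_sdiff hN]
    have hb : ∏ j ∈ Finset.range N \ S, Real.cos (Real.pi / 2 ^ (j + 2)) ≤ 1 :=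
      Finset.prod_le_one (fun i _ => (cos_pos_aux i).le) (fun i _ => Real.cos_le_one _)
    have hc : 0 ≤ ∏ j ∈ S, Real.cos (Real.pi / 2 ^ (j + 2)) :=
      Finset.prod_nonneg (fun i _ => (cos_pos_aux i).le)
    nlinarith
  calc 2 / Real.pi ≤ ∏ j ∈ Finset.range N, Real.cos (Real.pi / 2 ^ (j + 2)) := prod_cos_ge N
    _ ≤ ∏ j ∈ S, Real.cos (Real.pi / 2 ^ (j + 2)) := h1
    _ ≤ ∏ j ∈ S, f j :=
      Finset.prod_le_prod (fun i _ => (cos_pos_aux i).le) (fun i _ => hf i)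

/-- Lemma 3.9.  Let `|p_n| > 1` be integers and `D_n ⊂ ℤ` nonempty finite
digit sets with `C := sup_n max{|d/p_n| : d ∈ D_n} < ∞`.  For any `n ≥ 1` and `m > 0`, with
`J₀ := max{⌊log₂(8Cm)⌋, 0} + 1` we have `|p_{n+1}⋯p_{n+J₀}|⁻¹ · Cm < 1/4`, and
`∏_{j=1}^∞ |δ̂_{D_{n+J₀+j}}(ξ/(p_{n+1}⋯p_{n+J₀+j}))| ≥ 2/π` for every `|ξ| < m`
(0-indexed: `p i`, `D i` stand for `p_{i+1}`, `D_{i+1}`). -/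
theorem statement8
    (p : ℕ → ℤ) (D : ℕ → Finset ℤ)
    (hp : ∀ n, 1 < |p n|) (hD : ∀ n, (D n).Nonempty)
    (C : ℝ) (hC0 : 0 ≤ C)
    (hC : ∀ n, ∀ d ∈ D n, |(d : ℝ) / (p n : ℝ)| ≤ C)
    (n : ℕ) (m : ℝ) (hm : 0 < m) :
    |∏ i ∈ Finset.Ico n (n + J0 C m), (p i : ℝ)|⁻¹ * (C * m) < 1 / 4 ∧
      ∀ ξ : ℝ, |ξ| < m →
        2 / Real.pi ≤
          ∏' j : ℕ, ‖(dHat (D (n + J0 C m + j))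
            (ξ / ∏ i ∈ Finset.Ico n (n + J0 C m + j + 1), (p i : ℝ)))‖ := by
  have hp2 : ∀ i, (2:ℝ) ≤ |(p i : ℝ)| := by
    intro i
    have := hp i
    have h2 : (2:ℤ) ≤ |p i| := this
    calc (2:ℝ) = ((2:ℤ):ℝ) := by norm_num
      _ ≤ ((|p i| : ℤ) : ℝ) := by exact_mod_cast h2
      _ = |(p i : ℝ)| := by push_cast; ring
  have hpne : ∀ i, (p i : ℝ) ≠ 0 := by
    intro i
    have := hp2 i
    intro h
    rw [h, abs_zero] at this
    linarith
  -- general lower bound on products of |p i|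
  have habsprod : ∀ a b : ℕ, (2:ℝ) ^ (Finset.Ico a b).card ≤ |∏ i ∈ Finset.Ico a b, (p i : ℝ)| := by
    intro a b
    rw [Finset.abs_prod]
    calc (2:ℝ) ^ (Finset.Ico a b).card = ∏ _i ∈ Finset.Ico a b, (2:ℝ) := by
          rw [Finset.prod_const]
      _ ≤ ∏ i ∈ Finset.Ico a b, |(p i : ℝ)| :=
          Finset.prod_le_prod (fun _ _ => by norm_num) (fun i _ => hp2 i)
  have hkey := key8 C m hC0 hm
  set J := J0 C m with hJ
  have hCm : C * m ≤ 2 ^ J / 8 := by linarith [hkey]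
  constructor
  · -- part 1
    have hA : (2:ℝ) ^ J ≤ |∏ i ∈ Finset.Ico n (n + J), (p i : ℝ)| := by
      have := habsprod n (n + J)
      simpa [Nat.card_Ico] using this
    set A := |∏ i ∈ Finset.Ico n (n + J), (p i : ℝ)| with hA'
    have hApos : 0 < A := lt_of_lt_of_le (by positivity) hA
    have h1 : A⁻¹ * (C * m) ≤ A⁻¹ * (2 ^ J / 8) :=
      mul_le_mul_of_nonneg_left hCm (by positivity)
    have h2 : A⁻¹ * (2 ^ J / 8) ≤ 1 / 8 := by
      rw [inv_mul_le_iff₀ hApos]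
      linarith
    linarith
  · -- part 2
    intro ξ hξ
    set f : ℕ → ℝ := fun j => ‖(dHat (D (n + J + j))
        (ξ / ∏ i ∈ Finset.Ico n (n + J + j + 1), (p i : ℝ)))‖ with hf'
    have hf : ∀ j, Real.cos (Real.pi / 2 ^ (j + 2)) ≤ f j := by
      intro j
      set k := n + J + j with hk
      set Q := ∏ i ∈ Finset.Ico n k, (p i : ℝ) with hQ
      set P := ∏ i ∈ Finset.Ico n (k + 1), (p i : ℝ) with hP
      have hPQ : P = Q * (p k : ℝ) := Finset.prod_Ico_succ_top (by omega) _
      have hQbd : (2:ℝ) ^ (J + j) ≤ |Q| := by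
        have hcard' : (Finset.Ico n k).card = J + j := by
          rw [Nat.card_Ico]; omega
        have := habsprod n k
        rw [hcard'] at this
        exact this
      have hQpos : 0 < |Q| := lt_of_lt_of_le (by positivity) hQbd
      have hQne : Q ≠ 0 := by
        intro h; rw [h, abs_zero] at hQpos; exact lt_irrefl _ hQpos
      -- bound on each digit frequency
      have hdig : ∀ d ∈ D k, |(d : ℝ) * (ξ / P)| ≤ 1 / 2 ^ (j + 3) := by
        intro d hd
        have hdC := hC k d hd
        have h1 : |(d : ℝ) * (ξ / P)| = |(d : ℝ) / (p k : ℝ)| * (|ξ| / |Q|) := by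
          rw [hPQ]
          rw [abs_mul, abs_div, abs_mul, abs_div]
          field_simp
        rw [h1]
        have h2 : |ξ| / |Q| ≤ m / 2 ^ (J + j) := by
          apply div_le_div₀ hm.le hξ.le (by positivity) hQbd
        calc |(d : ℝ) / (p k : ℝ)| * (|ξ| / |Q|) ≤ C * (m / 2 ^ (J + j)) :=
              mul_le_mul hdC h2 (by positivity) hC0
          _ = C * m / 2 ^ (J + j) := by ring
          _ ≤ (2 ^ J / 8) / 2 ^ (J + j) := by gcongr
          _ = 1 / 2 ^ (j + 3) := by
              rw [pow_add]
              field_simp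
              ring
      -- real part computation
      have hcard : (0:ℝ) < ((D k).card : ℝ) := by
        have := (hD k).card_pos
        exact_mod_cast this
      have hre : (dHat (D k) (ξ / P)).re =
          ((D k).card : ℝ)⁻¹ * ∑ d ∈ D k, Real.cos (2 * Real.pi * (d : ℝ) * (ξ / P)) := by
        rw [dHat]
        have hcast : ((D k).card : ℂ)⁻¹ = (((((D k).card : ℝ))⁻¹ : ℝ) : ℂ) := by
          push_cast; ring
        rw [hcast, Complex.re_ofReal_mul, Complex.re_sum]
        congr 1
        apply Finset.sum_congr rfl
        intro d _
        have harg : 2 * (Real.pi : ℂ) * Complex.I * ((d : ℝ) : ℂ) * ((ξ / P : ℝ) : ℂ) =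
            ((2 * Real.pi * (d : ℝ) * (ξ / P) : ℝ) : ℂ) * Complex.I := by
          push_cast; ring
        rw [harg, Complex.exp_ofReal_mul_I_re]
      have hcosbd : ∀ d ∈ D k, Real.cos (Real.pi / 2 ^ (j + 2)) ≤
          Real.cos (2 * Real.pi * (d : ℝ) * (ξ / P)) := by
        intro d hd
        have h1 := hdig d hd
        have habs : |2 * Real.pi * (d : ℝ) * (ξ / P)| ≤ Real.pi / 2 ^ (j + 2) := by
          have : |2 * Real.pi * (d : ℝ) * (ξ / P)| = 2 * Real.pi * |(d : ℝ) * (ξ / P)| := by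
            rw [mul_assoc, abs_mul, abs_of_pos (by positivity : (0:ℝ) < 2 * Real.pi)]
          rw [this]
          calc 2 * Real.pi * |(d : ℝ) * (ξ / P)| ≤ 2 * Real.pi * (1 / 2 ^ (j + 3)) :=
                mul_le_mul_of_nonneg_left h1 (by positivity)
            _ = Real.pi / 2 ^ (j + 2) := by
                rw [pow_succ]
                ring
        rw [← Real.cos_abs (2 * Real.pi * (d : ℝ) * (ξ / P))]
        apply Real.cos_le_cos_of_nonneg_of_le_pi (abs_nonneg _)
        · have h2 : (1:ℝ) ≤ 2 ^ (j + 2) := one_le_pow₀ (by norm_num)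
          have := Real.pi_pos
          rw [div_le_iff₀ (by positivity)]
          nlinarith
        · exact habs
      have hsum : ((D k).card : ℝ) * Real.cos (Real.pi / 2 ^ (j + 2)) ≤
          ∑ d ∈ D k, Real.cos (2 * Real.pi * (d : ℝ) * (ξ / P)) := by
        calc ((D k).card : ℝ) * Real.cos (Real.pi / 2 ^ (j + 2))
            = ∑ _d ∈ D k, Real.cos (Real.pi / 2 ^ (j + 2)) := by
              rw [Finset.sum_const, nsmul_eq_mul]
          _ ≤ _ := Finset.sum_le_sum hcosbd
      have hre2 : Real.cos (Real.pi / 2 ^ (j + 2)) ≤ (dHat (D k) (ξ / P)).re := by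
        rw [hre]
        calc Real.cos (Real.pi / 2 ^ (j + 2))
            = ((D k).card : ℝ)⁻¹ * (((D k).card : ℝ) * Real.cos (Real.pi / 2 ^ (j + 2))) := by
              field_simp
          _ ≤ ((D k).card : ℝ)⁻¹ * ∑ d ∈ D k, Real.cos (2 * Real.pi * (d : ℝ) * (ξ / P)) :=
              mul_le_mul_of_nonneg_left hsum (by positivity)
      calc Real.cos (Real.pi / 2 ^ (j + 2)) ≤ (dHat (D k) (ξ / P)).re := hre2
        _ ≤ ‖dHat (D k) (ξ / P)‖ := Complex.re_le_norm _
    -- conclude via tprod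
    by_cases hmul : Multipliable f
    · exact ge_of_tendsto' hmul.hasProd (fun S => prod_ge_aux f hf S)
    · rw [tprod_eq_one_of_not_multipliable hmul]
      rw [div_le_one Real.pi_pos]
      exact Real.two_le_pi
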